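/- For every prime p ≥ 5 and every τ in the complex upper half-plane, (1/p)·Σ_{j=0}^{p−1} g₀((τ + 24j)/p) = p·χ₆(p)·g₀(pτ), where χ₆(p) := 1 if p ≡ 1 (mod 6) and χ₆(p) := −1 if p ≡ 5 (mod 6). -/

import Mathlib

open Complex

/-- The theta series `g₀(τ) = Σ_{n∈ℤ} (−1)ⁿ·(n + 1/3)·e^{3πi(n+1/3)²τ}`, absolutely
convergent for `Im τ > 0`. -/
noncomputable def g₀ (τ : ℂ) : ℂ :=
  ∑' n : ℤ, (-1 : ℂ) ^ n * ((n : ℂ) + 1 / 3) *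
    Complex.exp (3 * Real.pi * I * ((n : ℂ) + 1 / 3) ^ 2 * τ)

/-- `χ₆(p) = 1` if `p ≡ 1 (mod 6)`, `−1` if `p ≡ 5 (mod 6)`, and `0` otherwise. -/
def χ₆ (p : ℕ) : ℤ := if p % 6 = 1 then 1 else if p % 6 = 5 then -1 else 0

/-- The general term of the series `g₀`. -/
noncomputable def Fg (n : ℤ) (τ : ℂ) : ℂ :=
  (-1 : ℂ) ^ n * ((n : ℂ) + 1 / 3) *
    Complex.exp (3 * Real.pi * I * ((n : ℂ) + 1 / 3) ^ 2 * τ)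

lemma g₀_eq_tsum (τ : ℂ) : g₀ τ = ∑' n : ℤ, Fg n τ := rfl

lemma neg_one_zpow_int (n : ℤ) : (-1 : ℂ) ^ n = Complex.exp (Real.pi * I * n) := by
  rw [show ((Real.pi : ℂ) * I * n) = (n : ℤ) * (Real.pi * I) by ring,
    Complex.exp_int_mul, Complex.exp_pi_mul_I]

lemma Fg_eq_theta (n : ℤ) (σ : ℂ) :
    Fg n σ = Complex.exp (Real.pi * I * σ / 3) *
      ((1 / (2 * (Real.pi : ℂ) * I)) * jacobiTheta₂'_term n (σ + 1 / 2) (3 * σ)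
        + (1 / 3) * jacobiTheta₂_term n (σ + 1 / 2) (3 * σ)) := by
  have hπ : (Real.pi : ℂ) ≠ 0 := ofReal_ne_zero.mpr Real.pi_ne_zero
  rw [jacobiTheta₂'_term, jacobiTheta₂_term, Fg, neg_one_zpow_int]
  rw [show (1 / (2 * (Real.pi : ℂ) * I)) * (2 * (Real.pi : ℂ) * I * n *
        cexp (2 * (Real.pi : ℂ) * I * n * (σ + 1 / 2) + (Real.pi : ℂ) * I * n ^ 2 * (3 * σ)))
      = (n : ℂ) * cexp (2 * (Real.pi : ℂ) * I * n * (σ + 1 / 2) + (Real.pi : ℂ) * I * n ^ 2 * (3 * σ)) by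
    field_simp]
  rw [show ((n : ℂ) * cexp (2 * (Real.pi : ℂ) * I * n * (σ + 1 / 2) + (Real.pi : ℂ) * I * n ^ 2 * (3 * σ))
      + 1 / 3 * cexp (2 * (Real.pi : ℂ) * I * n * (σ + 1 / 2) + (Real.pi : ℂ) * I * n ^ 2 * (3 * σ)))
      = ((n : ℂ) + 1 / 3) * cexp (2 * (Real.pi : ℂ) * I * n * (σ + 1 / 2) + (Real.pi : ℂ) * I * n ^ 2 * (3 * σ)) by
    ring]
  rw [show Complex.exp ((Real.pi : ℂ) * I * σ / 3) * (((n : ℂ) + 1 / 3) *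
      cexp (2 * (Real.pi : ℂ) * I * n * (σ + 1 / 2) + (Real.pi : ℂ) * I * n ^ 2 * (3 * σ)))
      = ((n : ℂ) + 1 / 3) * (Complex.exp ((Real.pi : ℂ) * I * σ / 3) *
      cexp (2 * (Real.pi : ℂ) * I * n * (σ + 1 / 2) + (Real.pi : ℂ) * I * n ^ 2 * (3 * σ))) by ring,
    ← Complex.exp_add]
  rw [show Complex.exp ((Real.pi : ℂ) * I * n) * ((n : ℂ) + 1 / 3) *
      Complex.exp (3 * (Real.pi : ℂ) * I * ((n : ℂ) + 1 / 3) ^ 2 * σ)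
      = ((n : ℂ) + 1 / 3) * (Complex.exp ((Real.pi : ℂ) * I * n) *
      Complex.exp (3 * (Real.pi : ℂ) * I * ((n : ℂ) + 1 / 3) ^ 2 * σ)) by ring, ← Complex.exp_add]
  congr 2
  ring

lemma summable_Fg {σ : ℂ} (h : 0 < σ.im) : Summable fun n : ℤ => Fg n σ := by
  have h3 : 0 < (3 * σ).im := by
    have : ((3 : ℂ) * σ).im = 3 * σ.im := by
      simp [Complex.mul_im]
    rw [this]; linarith
  have h1 := (summable_jacobiTheta₂_term_iff (σ + 1 / 2) (3 * σ)).mpr h3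
  have h2 := (summable_jacobiTheta₂'_term_iff (σ + 1 / 2) (3 * σ)).mpr h3
  have := (((h2.mul_left (1 / (2 * (Real.pi : ℂ) * I))).add
    (h1.mul_left (1 / 3))).mul_left (Complex.exp ((Real.pi : ℂ) * I * σ / 3)))
  exact this.congr fun n => (Fg_eq_theta n σ).symm

/-- For every prime `p ≥ 5` and every `τ` in the upper half-plane,
`(1/p)·Σ_{j=0}^{p−1} g₀((τ + 24j)/p) = p·χ₆(p)·g₀(pτ)`. -/
theorem g₀_Up_star (p : ℕ) (hp : p.Prime) (hp5 : 5 ≤ p) (τ : ℂ) (hτ : 0 < τ.im) :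
    (1 / (p : ℂ)) * ∑ j ∈ Finset.range p, g₀ ((τ + 24 * (j : ℂ)) / (p : ℂ)) =
      (p : ℂ) * (χ₆ p : ℂ) * g₀ ((p : ℂ) * τ) := by
  have hppos : 0 < p := hp.pos
  have hp0 : (p : ℂ) ≠ 0 := Nat.cast_ne_zero.mpr hppos.ne'
  have hpZ : Prime (p : ℤ) := Nat.prime_iff_prime_int.mp hp
  -- p mod 6 is 1 or 5
  have hp6 : p % 6 = 1 ∨ p % 6 = 5 := by
    have h2 : ¬ 2 ∣ p := fun h => by
      have := (Nat.prime_dvd_prime_iff_eq Nat.prime_two hp).mp h; omega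
    have h3 : ¬ 3 ∣ p := fun h => by
      have := (Nat.prime_dvd_prime_iff_eq Nat.prime_three hp).mp h; omega
    omega
  obtain ⟨e, c, he, hc, hcE, hchi⟩ :
      ∃ e c : ℤ, (e = 1 ∨ e = -1) ∧ 3 * c + 1 = e * p ∧ Even c ∧ e = χ₆ p := by
    rcases hp6 with h | h
    · obtain ⟨t, ht⟩ : ∃ t, p = 6 * t + 1 := ⟨p / 6, by omega⟩
      exact ⟨1, 2 * t, Or.inl rfl, by push_cast [ht]; ring, ⟨t, by ring⟩,
        by simp [χ₆, h]⟩
    · obtain ⟨t, ht⟩ : ∃ t, p = 6 * t + 5 := ⟨p / 6, by omega⟩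
      refine ⟨-1, -(2 * t + 2), Or.inr rfl, by push_cast [ht]; ring, ⟨-(t + 1), by ring⟩, ?_⟩
      simp only [χ₆, h]; norm_num
  have he2 : e * e = 1 := by rcases he with h | h <;> simp [h]
  have hene : e * (p : ℤ) ≠ 0 := by
    rcases he with h | h <;> simp [h, hppos.ne']
  -- the primitive p-th root of unity
  set w : ℂ := Complex.exp (2 * (Real.pi : ℂ) * I / p) with hw
  have hprim : IsPrimitiveRoot w p := Complex.isPrimitiveRoot_exp p hppos.ne'
  -- each summand series is summable
  have hsummand : ∀ j : ℕ, Summable fun n : ℤ => Fg n ((τ + 24 * (j : ℂ)) / (p : ℂ)) := by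
    intro j
    apply summable_Fg
    rw [show ((p : ℂ)) = ((p : ℝ) : ℂ) by push_cast; rfl, Complex.div_ofReal_im]
    have : (τ + 24 * (j : ℂ)).im = τ.im := by
      simp
    rw [this]
    positivity
  -- key inner-sum computation
  have hinner : ∀ n : ℤ, (∑ j ∈ Finset.range p, Fg n ((τ + 24 * (j : ℂ)) / (p : ℂ)))
      = (if (p : ℤ) ∣ 3 * n + 1 then (p : ℂ) * Fg n (τ / p) else 0) := by
    intro n
    have hterm : ∀ j : ℕ, Fg n ((τ + 24 * (j : ℂ)) / (p : ℂ))
        = Fg n (τ / p) * (w ^ ((4 * (3 * n + 1) ^ 2 : ℤ))) ^ j := by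
      intro j
      have hzp : (w ^ ((4 * (3 * n + 1) ^ 2 : ℤ))) ^ j
          = Complex.exp ((((4 * (3 * n + 1) ^ 2) * (j : ℤ) : ℤ) : ℂ) * (2 * (Real.pi : ℂ) * I / p)) := by
        rw [Complex.exp_int_mul, ← hw, ← zpow_natCast (w ^ ((4 * (3 * n + 1) ^ 2 : ℤ))) j, ← zpow_mul]
      have hexp : 3 * (Real.pi : ℂ) * I * ((n : ℂ) + 1 / 3) ^ 2 * ((τ + 24 * (j : ℂ)) / (p : ℂ))
          = 3 * (Real.pi : ℂ) * I * ((n : ℂ) + 1 / 3) ^ 2 * (τ / (p : ℂ))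
            + ((((4 * (3 * n + 1) ^ 2) * (j : ℤ) : ℤ)) : ℂ) * (2 * (Real.pi : ℂ) * I / p) := by
        push_cast
        field_simp
        ring
      rw [hzp, Fg, Fg, hexp, Complex.exp_add]
      ring
    rw [Finset.sum_congr rfl fun j _ => hterm j, ← Finset.mul_sum]
    by_cases hdvd : (p : ℤ) ∣ 3 * n + 1
    · have : w ^ ((4 * (3 * n + 1) ^ 2 : ℤ)) = 1 := by
        rw [hprim.zpow_eq_one_iff_dvd]
        exact (dvd_pow hdvd two_ne_zero).mul_left 4
      rw [if_pos hdvd, this]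
      simp [mul_comm]
    · have hne1 : w ^ ((4 * (3 * n + 1) ^ 2 : ℤ)) ≠ 1 := by
        intro h1
        have hdvd4 : (p : ℤ) ∣ 4 * (3 * n + 1) ^ 2 := (hprim.zpow_eq_one_iff_dvd _).mp h1
        rcases hpZ.dvd_mul.mp hdvd4 with h4 | hsq
        · have : (p : ℤ) ≤ 4 := Int.le_of_dvd (by norm_num) h4
          omega
        · exact hdvd (hpZ.dvd_of_dvd_pow hsq)
      rw [if_neg hdvd, geom_sum_eq hne1]
      have : (w ^ ((4 * (3 * n + 1) ^ 2 : ℤ))) ^ p = 1 := by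
        rw [← zpow_natCast, ← zpow_mul, mul_comm, zpow_mul, zpow_natCast, hprim.pow_eq_one,
          one_zpow]
      rw [this]
      simp
  -- reindexing function
  set i : ℤ → ℤ := fun k => e * p * k + c with hi
  have hinj : Function.Injective i := by
    intro a b hab
    simp only [hi] at hab
    have := add_right_cancel hab
    exact mul_left_cancel₀ hene this
  set G : ℤ → ℂ := fun n => if (p : ℤ) ∣ 3 * n + 1 then (p : ℂ) * Fg n (τ / p) else 0 with hG
  have hsupp : Function.support G ⊆ Set.range i := by
    intro n hn
    have hdvd : (p : ℤ) ∣ 3 * n + 1 := by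
      by_contra h
      exact hn (by simp [hG, h])
    obtain ⟨t, ht⟩ := hdvd
    have h3 : (3 : ℤ) ∣ t - e := by
      have hpd : (3 : ℤ) ∣ (p : ℤ) * (t - e) := ⟨n - c, by linear_combination hc - ht⟩
      rcases Int.prime_three.dvd_mul.mp hpd with h | h
      · exfalso
        have : (3 : ℕ) ∣ p := Int.ofNat_dvd.mp (by exact_mod_cast h)
        have := (Nat.prime_dvd_prime_iff_eq Nat.prime_three hp).mp this
        omega
      · exact h
    obtain ⟨s, hs⟩ := h3
    refine ⟨e * s, ?_⟩
    simp only [hi]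
    have : e * (p : ℤ) * (e * s) = (p : ℤ) * s := by
      rw [show e * (p : ℤ) * (e * s) = (e * e) * ((p : ℤ) * s) by ring, he2, one_mul]
    rw [this]
    -- 3n+1 = p t, t = e + 3 s, 3c+1 = e p  ⟹  n = p s + c
    have h1 : t = e + 3 * s := by linarith
    have : 3 * n + 1 = 3 * ((p : ℤ) * s + c) + 1 := by
      rw [ht, h1]; linear_combination -hc
    linarith
  -- value of G on the range
  have hGi : ∀ k : ℤ, G (i k) = ((p : ℂ) * ((e : ℂ) * (p : ℂ))) * Fg k ((p : ℂ) * τ) := by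
    intro k
    have hik : (3 : ℤ) * i k + 1 = e * p * (3 * k + 1) := by
      simp only [hi]; linear_combination hc
    have hdvd : (p : ℤ) ∣ 3 * (i k) + 1 := ⟨e * (3 * k + 1), by rw [hik]; ring⟩
    rw [hG]
    simp only [if_pos hdvd]
    rw [mul_assoc]
    congr 1
    -- Fg (i k) (τ/p) = e * p * Fg k (p τ)
    have hpar : (-1 : ℂ) ^ (i k) = (-1 : ℂ) ^ k := by
      have hev : Even (i k - k) := by
        have : i k - k = c * (3 * k + 1) := by
          simp only [hi]; linear_combination (-k) * hc
        rw [this]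
        exact hcE.mul_right _
      rw [show i k = (i k - k) + k by ring, zpow_add₀ (by norm_num : (-1 : ℂ) ≠ 0),
        Even.neg_one_zpow hev, one_mul]
    have hcast : ((i k : ℤ) : ℂ) + 1 / 3 = (e : ℂ) * (p : ℂ) * ((k : ℂ) + 1 / 3) := by
      have h := congrArg (fun x : ℤ => (x : ℂ)) hik
      push_cast at h
      linear_combination (1 / 3 : ℂ) * h
    have he2C : (e : ℂ) * (e : ℂ) = 1 := by exact_mod_cast congrArg (fun x : ℤ => (x : ℂ)) he2
    have hexp2 : 3 * (Real.pi : ℂ) * I * ((e : ℂ) * (p : ℂ) * ((k : ℂ) + 1 / 3)) ^ 2 * (τ / (p : ℂ))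
        = 3 * (Real.pi : ℂ) * I * ((k : ℂ) + 1 / 3) ^ 2 * ((p : ℂ) * τ) := by
      have h1 : ((e : ℂ) * (p : ℂ) * ((k : ℂ) + 1 / 3)) ^ 2
          = ((e : ℂ) * (e : ℂ)) * ((p : ℂ) * (p : ℂ) * ((k : ℂ) + 1 / 3) ^ 2) := by ring
      rw [h1, he2C, one_mul]
      field_simp
    rw [Fg, Fg, hpar, hcast, hexp2]
    ring
  -- putting everything together
  calc (1 / (p : ℂ)) * ∑ j ∈ Finset.range p, g₀ ((τ + 24 * (j : ℂ)) / (p : ℂ))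
      = (1 / (p : ℂ)) * ∑' n : ℤ, ∑ j ∈ Finset.range p, Fg n ((τ + 24 * (j : ℂ)) / (p : ℂ)) := by
        rw [Summable.tsum_finsetSum fun j _ => hsummand j]
        rfl
    _ = (1 / (p : ℂ)) * ∑' n : ℤ, G n := by
        rw [tsum_congr fun n => hinner n]
    _ = (1 / (p : ℂ)) * ∑' k : ℤ, G (i k) := by rw [hinj.tsum_eq hsupp]
    _ = (1 / (p : ℂ)) * ∑' k : ℤ, ((p : ℂ) * ((e : ℂ) * (p : ℂ))) * Fg k ((p : ℂ) * τ) := by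
        rw [tsum_congr fun k => hGi k]
    _ = (1 / (p : ℂ)) * (((p : ℂ) * ((e : ℂ) * (p : ℂ))) * ∑' k : ℤ, Fg k ((p : ℂ) * τ)) := by
        rw [tsum_mul_left]
    _ = (p : ℂ) * (χ₆ p : ℂ) * g₀ ((p : ℂ) * τ) := by
        rw [g₀_eq_tsum]
        have hec : ((e : ℂ)) = (χ₆ p : ℂ) := by exact_mod_cast congrArg (fun x : ℤ => (x : ℂ)) hchi
        rw [← hec]
        field_simp
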